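/- Let r, h > 0 and define A(s) = 4π ∫₀^h (r cosh(sz)/cosh(sh)) · √(1 + (r s sinh(sz)/cosh(sh))²) dz for s ≥ 0. Suppose 0 < s₁ < s₂ satisfy r s₁ = cosh(s₁ h) and r s₂ = cosh(s₂ h), and that every s > 0 with r s = cosh(s h) equals s₁ or s₂. Then A is strictly decreasing on [0, s₁], strictly increasing on [s₁, s₂], and strictly decreasing on [s₂, ∞); in particular A has a local minimum at s₁ (the stable catenoid) and a local maximum at s₂ (the unstable catenoid). -/

import Mathlib

open Real Set

lemma hasDerivAt_G (v : ℝ) :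
    HasDerivAt (fun v : ℝ => v * Real.sqrt (1 + v ^ 2) + Real.arsinh v)
      (2 * Real.sqrt (1 + v ^ 2)) v := by
  have h1 : (0:ℝ) < 1 + v ^ 2 := by positivity
  have hS : Real.sqrt (1 + v ^ 2) ^ 2 = 1 + v ^ 2 := Real.sq_sqrt h1.le
  have hS0 : Real.sqrt (1 + v ^ 2) ≠ 0 := by positivity
  have hin : HasDerivAt (fun v : ℝ => 1 + v ^ 2) (2 * v) v := by
    simpa using ((hasDerivAt_pow 2 v).const_add 1)
  have hsq : HasDerivAt (fun v : ℝ => Real.sqrt (1 + v ^ 2))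
      (1 / (2 * Real.sqrt (1 + v ^ 2)) * (2 * v)) v :=
    (Real.hasDerivAt_sqrt h1.ne').comp v hin
  have := ((hasDerivAt_id v).mul hsq).add (Real.hasDerivAt_arsinh v)
  refine this.congr_deriv (Eq.symm ?_)
  simp only [id]
  field_simp
  linear_combination hS

lemma g_hasDeriv (β v : ℝ) :
    HasDerivAt (fun v : ℝ => β * (v * Real.sqrt (1 + v ^ 2)) - Real.arsinh v)
      ((β * (1 + 2 * v ^ 2) - 1) / Real.sqrt (1 + v ^ 2)) v := by
  have h1 : (0:ℝ) < 1 + v ^ 2 := by positivity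
  have hS : Real.sqrt (1 + v ^ 2) ^ 2 = 1 + v ^ 2 := Real.sq_sqrt h1.le
  have hS0 : Real.sqrt (1 + v ^ 2) ≠ 0 := by positivity
  have hin : HasDerivAt (fun v : ℝ => 1 + v ^ 2) (2 * v) v := by
    simpa using ((hasDerivAt_pow 2 v).const_add 1)
  have hsq : HasDerivAt (fun v : ℝ => Real.sqrt (1 + v ^ 2))
      (1 / (2 * Real.sqrt (1 + v ^ 2)) * (2 * v)) v :=
    (Real.hasDerivAt_sqrt h1.ne').comp v hin
  have := ((((hasDerivAt_id v).mul hsq)).const_mul β).sub (Real.hasDerivAt_arsinh v)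
  refine this.congr_deriv (Eq.symm ?_)
  simp only [id]
  field_simp
  linear_combination (-β) * hS

lemma g_sign {a v : ℝ} (ha : 0 < a) (hv : 0 < v) :
    (v < Real.sinh a →
      a / (Real.sinh a * Real.cosh a) * (v * Real.sqrt (1 + v ^ 2)) - Real.arsinh v < 0) ∧
    (Real.sinh a < v →
      0 < a / (Real.sinh a * Real.cosh a) * (v * Real.sqrt (1 + v ^ 2)) - Real.arsinh v) := by
  have hσ : 0 < Real.sinh a := Real.sinh_pos_iff.2 ha
  have hk : 0 < Real.cosh a := Real.cosh_pos a
  set β : ℝ := a / (Real.sinh a * Real.cosh a) with hβ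
  set g : ℝ → ℝ := fun v => β * (v * Real.sqrt (1 + v ^ 2)) - Real.arsinh v with hg
  have hβ0 : 0 < β := div_pos ha (by positivity)
  have hβ1 : β < 1 := by
    rw [hβ, div_lt_one (by positivity)]
    calc a < Real.sinh a := (Real.self_lt_sinh_iff).2 ha
    _ ≤ Real.sinh a * Real.cosh a := le_mul_of_one_le_right hσ.le (Real.one_le_cosh a)
  have hcont : Continuous g := by
    have := fun v => (g_hasDeriv β v).differentiableAt
    exact (Differentiable.continuous this)
  set c : ℝ := Real.sqrt ((1 - β) / (2 * β)) with hc
  have hβd : 0 < (1 - β) / (2 * β) := div_pos (by linarith) (by linarith)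
  have hcpos : 0 < c := Real.sqrt_pos.2 hβd
  have hc2 : c ^ 2 = (1 - β) / (2 * β) := Real.sq_sqrt hβd.le
  have key : ∀ w : ℝ, β * (1 + 2 * w ^ 2) - 1 = 2 * β * (w ^ 2 - c ^ 2) := by
    intro w; rw [hc2]; field_simp; ring
  have hanti : StrictAntiOn g (Icc 0 c) := by
    apply strictAntiOn_of_deriv_neg (convex_Icc _ _) hcont.continuousOn
    intro x hx
    rw [interior_Icc] at hx
    rw [(g_hasDeriv β x).deriv]
    apply div_neg_of_neg_of_pos _ (by positivity)
    rw [key]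
    have : x ^ 2 < c ^ 2 := by nlinarith [hx.1, hx.2]
    nlinarith
  have hmono : StrictMonoOn g (Ici c) := by
    apply strictMonoOn_of_deriv_pos (convex_Ici _) hcont.continuousOn
    intro x hx
    rw [interior_Ici] at hx
    rw [(g_hasDeriv β x).deriv]
    apply div_pos _ (by positivity)
    rw [key]
    have hcx : c < x := hx
    have : c ^ 2 < x ^ 2 := by nlinarith [hcpos, hcx]
    nlinarith
  have hg0 : g 0 = 0 := by simp [hg]
  have hgσ : g (Real.sinh a) = 0 := by
    have h1 : (1:ℝ) + Real.sinh a ^ 2 = Real.cosh a ^ 2 := (Real.cosh_sq' a).symm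
    rw [hg]
    simp only
    rw [h1, Real.sqrt_sq hk.le, Real.arsinh_sinh, hβ]
    field_simp
    ring
  have hcσ : c ≤ Real.sinh a := by
    by_contra hlt
    push_neg at hlt
    have := hanti (Set.mem_Icc.2 ⟨le_refl 0, hcpos.le⟩)
      (Set.mem_Icc.2 ⟨hσ.le, hlt.le⟩) hσ
    rw [hg0, hgσ] at this
    exact lt_irrefl 0 this
  constructor
  · intro hvσ
    rcases le_or_gt v c with hvc | hvc
    · have := hanti (Set.mem_Icc.2 ⟨le_refl 0, hcpos.le⟩) (Set.mem_Icc.2 ⟨hv.le, hvc⟩) hv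
      rw [hg0] at this
      exact this
    · have := hmono (Set.mem_Ici.2 hvc.le) (Set.mem_Ici.2 hcσ) hvσ
      rw [hgσ] at this
      exact this
  · intro hσv
    have := hmono (Set.mem_Ici.2 hcσ) (Set.mem_Ici.2 (hcσ.trans hσv.le)) hσv
    rw [hgσ] at this
    exact this

lemma integral_closed (r h s : ℝ) (hs : s ≠ 0) :
    ∫ z in (0:ℝ)..h, (r * Real.cosh (s * z) / Real.cosh (s * h)) *
        Real.sqrt (1 + (r * s * Real.sinh (s * z) / Real.cosh (s * h)) ^ 2)
    = (r * s * Real.sinh (s * h) / Real.cosh (s * h) *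
        Real.sqrt (1 + (r * s * Real.sinh (s * h) / Real.cosh (s * h)) ^ 2) +
        Real.arsinh (r * s * Real.sinh (s * h) / Real.cosh (s * h))) / (2 * s ^ 2) := by
  have hk : Real.cosh (s * h) ≠ 0 := (Real.cosh_pos (s * h)).ne'
  set w : ℝ → ℝ := fun z => r * s * Real.sinh (s * z) / Real.cosh (s * h) with hw
  have hwz : ∀ z : ℝ, HasDerivAt w (r * s ^ 2 * Real.cosh (s * z) / Real.cosh (s * h)) z := by
    intro z
    have h1 : HasDerivAt (fun z : ℝ => s * z) s z := by
      simpa using (hasDerivAt_id z).const_mul s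
    have h2 := ((h1.sinh).const_mul (r * s)).div_const (Real.cosh (s * h))
    refine h2.congr_deriv (Eq.symm ?_)
    ring
  have hH : ∀ z : ℝ, HasDerivAt (fun z => (w z * Real.sqrt (1 + w z ^ 2) + Real.arsinh (w z)) / (2 * s ^ 2))
      ((r * Real.cosh (s * z) / Real.cosh (s * h)) *
        Real.sqrt (1 + (r * s * Real.sinh (s * z) / Real.cosh (s * h)) ^ 2)) z := by
    intro z
    have := ((hasDerivAt_G (w z)).comp z (hwz z)).div_const (2 * s ^ 2)
    refine this.congr_deriv (Eq.symm ?_)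
    show (r * Real.cosh (s * z) / Real.cosh (s * h)) * Real.sqrt (1 + (w z) ^ 2) = _
    field_simp
  have hint : IntervalIntegrable (fun z => (r * Real.cosh (s * z) / Real.cosh (s * h)) *
      Real.sqrt (1 + (r * s * Real.sinh (s * z) / Real.cosh (s * h)) ^ 2)) MeasureTheory.volume 0 h := by
    apply Continuous.intervalIntegrable
    apply Continuous.mul (by fun_prop)
    exact Real.continuous_sqrt.comp (by fun_prop)
  rw [intervalIntegral.integral_eq_sub_of_hasDerivAt (fun z _ => hH z) hint]
  have hw0 : w 0 = 0 := by simp [hw]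
  rw [hw0]
  simp [hw]

lemma hasDerivAt_closed (r h s : ℝ) (hs : s ≠ 0) :
    HasDerivAt (fun s => 2 * Real.pi * (r * s * Real.sinh (s * h) / Real.cosh (s * h) *
        Real.sqrt (1 + (r * s * Real.sinh (s * h) / Real.cosh (s * h)) ^ 2) +
        Real.arsinh (r * s * Real.sinh (s * h) / Real.cosh (s * h))) / s ^ 2)
      (4 * Real.pi / s ^ 3 * (r * s ^ 2 * h *
          Real.sqrt (1 + (r * s * Real.sinh (s * h) / Real.cosh (s * h)) ^ 2) / Real.cosh (s * h) ^ 2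
        - Real.arsinh (r * s * Real.sinh (s * h) / Real.cosh (s * h)))) s := by
  have hk : Real.cosh (s * h) ≠ 0 := (Real.cosh_pos (s * h)).ne'
  have hid : Real.cosh (s * h) ^ 2 - Real.sinh (s * h) ^ 2 = 1 := Real.cosh_sq_sub_sinh_sq (s * h)
  have hmul : ∀ x : ℝ, HasDerivAt (fun s : ℝ => s * h) h x := fun x => hasDerivAt_mul_const h
  have hN : HasDerivAt (fun s : ℝ => r * s * Real.sinh (s * h))
      (r * Real.sinh (s * h) + r * s * (Real.cosh (s * h) * h)) s := by
    have h1 : HasDerivAt (fun s : ℝ => r * s) r s := by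
      simpa using (hasDerivAt_id s).const_mul r
    exact h1.mul ((hmul s).sinh)
  have hu : HasDerivAt (fun s : ℝ => r * s * Real.sinh (s * h) / Real.cosh (s * h))
      (r * Real.sinh (s * h) / Real.cosh (s * h) + r * s * h / Real.cosh (s * h) ^ 2) s := by
    have := hN.div ((hmul s).cosh) hk
    refine this.congr_deriv (Eq.symm ?_)
    field_simp
    linear_combination (-(r * s * h)) * hid
  have hGu := (hasDerivAt_G (r * s * Real.sinh (s * h) / Real.cosh (s * h))).comp s hu
  have hfin := (hGu.const_mul (2 * Real.pi)).div (hasDerivAt_pow 2 s) (pow_ne_zero 2 hs)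
  refine hfin.congr_deriv (Eq.symm ?_)
  have hS0 : Real.sqrt (1 + (r * s * Real.sinh (s * h) / Real.cosh (s * h)) ^ 2) ≠ 0 := by positivity
  simp only [Function.comp, mul_comm h s]
  field_simp
  ring

noncomputable def catU (r h s : ℝ) : ℝ := r * s * Real.sinh (s * h) / Real.cosh (s * h)

noncomputable def catD (r h s : ℝ) : ℝ :=
  4 * Real.pi / s ^ 3 * (r * s ^ 2 * h *
      Real.sqrt (1 + catU r h s ^ 2) / Real.cosh (s * h) ^ 2 - Real.arsinh (catU r h s))

lemma catD_neg {r h s : ℝ} (hr : 0 < r) (hh : 0 < h) (hs : 0 < s)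
    (hlt : r * s < Real.cosh (s * h)) : catD r h s < 0 := by
  have ha : 0 < s * h := by positivity
  have hσ : 0 < Real.sinh (s * h) := Real.sinh_pos_iff.2 ha
  have hk : 0 < Real.cosh (s * h) := Real.cosh_pos _
  have hv : 0 < catU r h s := by unfold catU; positivity
  have hvσ : catU r h s < Real.sinh (s * h) := by
    unfold catU; rw [div_lt_iff₀ hk]; nlinarith
  have hE := (g_sign ha hv).1 hvσ
  have heq : r * s ^ 2 * h * Real.sqrt (1 + catU r h s ^ 2) / Real.cosh (s * h) ^ 2
      - Real.arsinh (catU r h s)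
      = (s * h) / (Real.sinh (s * h) * Real.cosh (s * h)) *
        (catU r h s * Real.sqrt (1 + catU r h s ^ 2)) - Real.arsinh (catU r h s) := by
    unfold catU; field_simp
  unfold catD; rw [heq]
  exact mul_neg_of_pos_of_neg (by positivity) hE

lemma catD_pos {r h s : ℝ} (hr : 0 < r) (hh : 0 < h) (hs : 0 < s)
    (hlt : Real.cosh (s * h) < r * s) : 0 < catD r h s := by
  have ha : 0 < s * h := by positivity
  have hσ : 0 < Real.sinh (s * h) := Real.sinh_pos_iff.2 ha
  have hk : 0 < Real.cosh (s * h) := Real.cosh_pos _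
  have hv : 0 < catU r h s := by unfold catU; positivity
  have hvσ : Real.sinh (s * h) < catU r h s := by
    unfold catU; rw [lt_div_iff₀ hk]; nlinarith
  have hE := (g_sign ha hv).2 hvσ
  have heq : r * s ^ 2 * h * Real.sqrt (1 + catU r h s ^ 2) / Real.cosh (s * h) ^ 2
      - Real.arsinh (catU r h s)
      = (s * h) / (Real.sinh (s * h) * Real.cosh (s * h)) *
        (catU r h s * Real.sqrt (1 + catU r h s ^ 2)) - Real.arsinh (catU r h s) := by
    unfold catU; field_simp
  unfold catD; rw [heq]
  exact mul_pos (by positivity) hE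

/-- **Monotonicity of the area along the family of catenoidal slices.**
Let `r, h > 0`, let `A(s)` be the area of the catenoidal slice `C_s^{r,h}`, and let
`0 < s₁ < s₂` be the two positive solutions of `r s = cosh (s h)`. Then `A` is strictly
decreasing on `[0, s₁]`, strictly increasing on `[s₁, s₂]` and strictly decreasing on
`[s₂, ∞)`; in particular `A` has a local minimum at `s₁` (the stable catenoid) and a local
maximum at `s₂` (the unstable catenoid). -/
theorem area_monotonicity_catenoid_family
    (r h : ℝ) (hr : 0 < r) (hh : 0 < h)
    (A : ℝ → ℝ)
    (hA : ∀ s : ℝ, A s = 4 * Real.pi * ∫ z in (0:ℝ)..h,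
        (r * Real.cosh (s * z) / Real.cosh (s * h)) *
          Real.sqrt (1 + (r * s * Real.sinh (s * z) / Real.cosh (s * h)) ^ 2))
    (s₁ s₂ : ℝ) (hs₁ : 0 < s₁) (hs₁₂ : s₁ < s₂)
    (heq₁ : r * s₁ = Real.cosh (s₁ * h)) (heq₂ : r * s₂ = Real.cosh (s₂ * h))
    (honly : ∀ s : ℝ, 0 < s → r * s = Real.cosh (s * h) → s = s₁ ∨ s = s₂) :
    StrictAntiOn A (Set.Icc 0 s₁) ∧ StrictMonoOn A (Set.Icc s₁ s₂) ∧
      StrictAntiOn A (Set.Ici s₂) ∧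
      IsLocalMinOn A (Set.Ici 0) s₁ ∧ IsLocalMaxOn A (Set.Ici 0) s₂ := by
  -- closed form of A on positive reals
  have hclosed : ∀ s : ℝ, 0 < s → A s =
      2 * Real.pi * (r * s * Real.sinh (s * h) / Real.cosh (s * h) *
        Real.sqrt (1 + (r * s * Real.sinh (s * h) / Real.cosh (s * h)) ^ 2) +
        Real.arsinh (r * s * Real.sinh (s * h) / Real.cosh (s * h))) / s ^ 2 := by
    intro s hs
    rw [hA s, integral_closed r h s hs.ne']
    ring
  -- derivative of A on positive reals
  have hderivA : ∀ x : ℝ, 0 < x → HasDerivAt A (catD r h x) x := by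
    intro x hx
    simp only [catD, catU]
    exact (hasDerivAt_closed r h x hx.ne').congr_of_eventuallyEq
      (by filter_upwards [Ioi_mem_nhds hx] with y hy; exact hclosed y hy)
  -- sign of ψ(s) = r s - cosh (s h) via strict concavity
  set ψ : ℝ → ℝ := fun s => r * s - Real.cosh (s * h) with hψ
  have hψ1 : ψ s₁ = 0 := by simp [hψ, heq₁]
  have hψ2 : ψ s₂ = 0 := by simp [hψ, heq₂]
  have hψcc : StrictConcaveOn ℝ Set.univ ψ := by
    apply strictConcaveOn_of_deriv2_neg convex_univ (Continuous.continuousOn (by fun_prop))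
    intro x _
    have hψd : ∀ y : ℝ, HasDerivAt ψ (r - Real.sinh (y * h) * h) y := by
      intro y
      rw [hψ]
      have := ((hasDerivAt_id y).const_mul r).sub ((hasDerivAt_mul_const h).cosh)
      exact this.congr_deriv (by ring)
    have hd1 : deriv ψ = fun y => r - Real.sinh (y * h) * h := funext fun y => (hψd y).deriv
    have hd2 : HasDerivAt (fun y => r - Real.sinh (y * h) * h)
        (0 - Real.cosh (x * h) * h * h) x := by
      exact (hasDerivAt_const x r).sub (((hasDerivAt_mul_const h).sinh).mul_const h)
    have hiter : deriv^[2] ψ x = deriv (deriv ψ) x := by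
      simp [Function.iterate_succ, Function.iterate_zero]
    rw [hiter, hd1, hd2.deriv]
    have h1 := Real.cosh_pos (x * h)
    have h2 := mul_pos (mul_pos h1 hh) hh
    linarith
  have hneg_left : ∀ x : ℝ, 0 < x → x < s₁ → r * x < Real.cosh (x * h) := by
    intro x hx0 hx1
    have hx2 : x < s₂ := hx1.trans hs₁₂
    have hne : x ≠ s₂ := hx2.ne
    have hden : (0:ℝ) < s₂ - x := by linarith
    have ha : (0:ℝ) < (s₂ - s₁) / (s₂ - x) := div_pos (by linarith) hden
    have hb : (0:ℝ) < (s₁ - x) / (s₂ - x) := div_pos (by linarith) hden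
    have hab : (s₂ - s₁) / (s₂ - x) + (s₁ - x) / (s₂ - x) = 1 := by
      rw [← add_div, show s₂ - s₁ + (s₁ - x) = s₂ - x by ring]
      exact div_self hden.ne'
    have hcomb := hψcc.2 (Set.mem_univ x) (Set.mem_univ s₂) hne ha hb hab
    simp only [smul_eq_mul] at hcomb
    have hpt : (s₂ - s₁) / (s₂ - x) * x + (s₁ - x) / (s₂ - x) * s₂ = s₁ := by
      field_simp
      ring
    rw [hpt, hψ1, hψ2] at hcomb
    simp only [mul_zero, add_zero, zero_add] at hcomb
    have hψx : ψ x < 0 := by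
      by_contra hcon
      push_neg at hcon
      nlinarith [mul_nonneg ha.le hcon]
    have : r * x - Real.cosh (x * h) < 0 := by simpa [hψ] using hψx
    linarith
  have hpos_mid : ∀ x : ℝ, s₁ < x → x < s₂ → Real.cosh (x * h) < r * x := by
    intro x hx1 hx2
    have hne : s₁ ≠ s₂ := hs₁₂.ne
    have hden : (0:ℝ) < s₂ - s₁ := by linarith
    have ha : (0:ℝ) < (s₂ - x) / (s₂ - s₁) := div_pos (by linarith) hden
    have hb : (0:ℝ) < (x - s₁) / (s₂ - s₁) := div_pos (by linarith) hden
    have hab : (s₂ - x) / (s₂ - s₁) + (x - s₁) / (s₂ - s₁) = 1 := by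
      rw [← add_div, show s₂ - x + (x - s₁) = s₂ - s₁ by ring]
      exact div_self hden.ne'
    have hcomb := hψcc.2 (Set.mem_univ s₁) (Set.mem_univ s₂) hne ha hb hab
    simp only [smul_eq_mul] at hcomb
    have hpt : (s₂ - x) / (s₂ - s₁) * s₁ + (x - s₁) / (s₂ - s₁) * s₂ = x := by
      field_simp
      ring
    rw [hpt, hψ1, hψ2] at hcomb
    simp only [mul_zero, add_zero, zero_add] at hcomb
    have hψx : 0 < ψ x := hcomb
    have : 0 < r * x - Real.cosh (x * h) := by simpa [hψ] using hψx
    linarith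
  have hneg_right : ∀ x : ℝ, s₂ < x → r * x < Real.cosh (x * h) := by
    intro x hx2
    have hx1 : s₁ < x := hs₁₂.trans hx2
    have hne : s₁ ≠ x := hx1.ne
    have hden : (0:ℝ) < x - s₁ := by linarith
    have ha : (0:ℝ) < (x - s₂) / (x - s₁) := div_pos (by linarith) hden
    have hb : (0:ℝ) < (s₂ - s₁) / (x - s₁) := div_pos (by linarith) hden
    have hab : (x - s₂) / (x - s₁) + (s₂ - s₁) / (x - s₁) = 1 := by
      rw [← add_div, show x - s₂ + (s₂ - s₁) = x - s₁ by ring]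
      exact div_self hden.ne'
    have hcomb := hψcc.2 (Set.mem_univ s₁) (Set.mem_univ x) hne ha hb hab
    simp only [smul_eq_mul] at hcomb
    have hpt : (x - s₂) / (x - s₁) * s₁ + (s₂ - s₁) / (x - s₁) * x = s₂ := by
      field_simp
      ring
    rw [hpt, hψ1, hψ2] at hcomb
    simp only [mul_zero, add_zero, zero_add] at hcomb
    have hψx : ψ x < 0 := by
      by_contra hcon
      push_neg at hcon
      nlinarith [mul_nonneg hb.le hcon]
    have : r * x - Real.cosh (x * h) < 0 := by simpa [hψ] using hψx
    linarith
  -- continuity of A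
  have hcA : Continuous A := by
    have hAeq : A = fun s => 4 * Real.pi * ∫ z in (0:ℝ)..h,
        (r * Real.cosh (s * z) / Real.cosh (s * h)) *
          Real.sqrt (1 + (r * s * Real.sinh (s * z) / Real.cosh (s * h)) ^ 2) := funext hA
    rw [hAeq]
    apply continuous_const.mul
    apply intervalIntegral.continuous_parametric_intervalIntegral_of_continuous'
      (f := fun (s : ℝ) (z : ℝ) => (r * Real.cosh (s * z) / Real.cosh (s * h)) *
          Real.sqrt (1 + (r * s * Real.sinh (s * z) / Real.cosh (s * h)) ^ 2)) _ 0 h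
    have hd : Continuous (fun p : ℝ × ℝ => r * p.1 * Real.sinh (p.1 * p.2) / Real.cosh (p.1 * h)) :=
      Continuous.div (by fun_prop) (by fun_prop) (fun p => (Real.cosh_pos _).ne')
    have hd2 : Continuous (fun p : ℝ × ℝ => r * Real.cosh (p.1 * p.2) / Real.cosh (p.1 * h)) :=
      Continuous.div (by fun_prop) (by fun_prop) (fun p => (Real.cosh_pos _).ne')
    have : Continuous (fun p : ℝ × ℝ => (r * Real.cosh (p.1 * p.2) / Real.cosh (p.1 * h)) *
        Real.sqrt (1 + (r * p.1 * Real.sinh (p.1 * p.2) / Real.cosh (p.1 * h)) ^ 2)) :=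
      hd2.mul (Real.continuous_sqrt.comp (continuous_const.add (hd.pow 2)))
    exact this
  -- the three monotonicity statements
  have anti1 : StrictAntiOn A (Set.Icc 0 s₁) := by
    apply strictAntiOn_of_deriv_neg (convex_Icc _ _) hcA.continuousOn
    intro x hx
    rw [interior_Icc] at hx
    rw [(hderivA x hx.1).deriv]
    exact catD_neg hr hh hx.1 (hneg_left x hx.1 hx.2)
  have mono2 : StrictMonoOn A (Set.Icc s₁ s₂) := by
    apply strictMonoOn_of_deriv_pos (convex_Icc _ _) hcA.continuousOn
    intro x hx
    rw [interior_Icc] at hx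
    have hx0 : 0 < x := hs₁.trans hx.1
    rw [(hderivA x hx0).deriv]
    exact catD_pos hr hh hx0 (hpos_mid x hx.1 hx.2)
  have anti3 : StrictAntiOn A (Set.Ici s₂) := by
    apply strictAntiOn_of_deriv_neg (convex_Ici _) hcA.continuousOn
    intro x hx
    rw [interior_Ici] at hx
    have hx0 : 0 < x := hs₁.trans (hs₁₂.trans hx)
    rw [(hderivA x hx0).deriv]
    exact catD_neg hr hh hx0 (hneg_right x hx)
  refine ⟨anti1, mono2, anti3, ?_, ?_⟩
  · -- local min at s₁
    have hmem : Set.Ioo 0 s₂ ∈ nhdsWithin s₁ (Set.Ici 0) :=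
      mem_nhdsWithin_of_mem_nhds (Ioo_mem_nhds hs₁ hs₁₂)
    refine Filter.eventually_of_mem hmem ?_
    intro y hy
    rcases lt_trichotomy y s₁ with hlt | heq | hgt
    · exact (anti1 ⟨hy.1.le, hlt.le⟩ ⟨hs₁.le, le_refl s₁⟩ hlt).le
    · rw [heq]
    · exact (mono2 ⟨le_refl s₁, hs₁₂.le⟩ ⟨hgt.le, hy.2.le⟩ hgt).le
  · -- local max at s₂
    have hmem : Set.Ioi s₁ ∈ nhdsWithin s₂ (Set.Ici 0) :=
      mem_nhdsWithin_of_mem_nhds (Ioi_mem_nhds hs₁₂)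
    refine Filter.eventually_of_mem hmem ?_
    intro y hy
    rcases lt_trichotomy y s₂ with hlt | heq | hgt
    · exact (mono2 ⟨(Set.mem_Ioi.1 hy).le, hlt.le⟩ ⟨hs₁₂.le, le_refl s₂⟩ hlt).le
    · rw [heq]
    · exact (anti3 (Set.mem_Ici.2 (le_refl s₂)) (Set.mem_Ici.2 hgt.le) hgt).le
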